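/- If S and S' are distinct pure subgroups of a free abelian group M of finite rank and S + S' is pure, then the images S ⊗ 𝔽₂ and S' ⊗ 𝔽₂ in M ⊗ 𝔽₂ are distinct. -/

import Mathlib

open Submodule

lemma key_le_of_mod_two_subset (n : ℕ) (S S' : Submodule ℤ (Fin n → ℤ))
    (hS' : ∀ g : (Fin n → ℤ) ⧸ S', g ≠ 0 → ¬IsOfFinAddOrder g)
    (hsum : ∀ g : (Fin n → ℤ) ⧸ (S ⊔ S'), g ≠ 0 → ¬IsOfFinAddOrder g)
    (him : (fun (x : Fin n → ℤ) (i : Fin n) => ((x i : ℤ) : ZMod 2)) '' (S : Set (Fin n → ℤ)) ⊆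
      (fun (x : Fin n → ℤ) (i : Fin n) => ((x i : ℤ) : ZMod 2)) '' (S' : Set (Fin n → ℤ))) :
    S ≤ S' := by
  set N : Submodule ℤ ((Fin n → ℤ) ⧸ S') := S.map S'.mkQ with hN
  have hstep : ∀ s ∈ S, ∃ a ∈ S, S'.mkQ s = (2 : ℤ) • S'.mkQ a := by
    intro s hs
    obtain ⟨s', hs', heq⟩ := him ⟨s, hs, rfl⟩
    have hdvd : ∀ i, (2 : ℤ) ∣ s i - s' i := by
      intro i
      have h1 : ((s' i : ZMod 2)) = (s i : ZMod 2) := congrFun heq i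
      have : ((s i - s' i : ℤ) : ZMod 2) = 0 := by push_cast; rw [h1]; ring
      exact (ZMod.intCast_zmod_eq_zero_iff_dvd _ 2).mp this
    set y : Fin n → ℤ := fun i => (s i - s' i) / 2 with hy
    have h2y : (2 : ℤ) • y = s - s' := by
      funext i
      simpa using Int.mul_ediv_cancel' (hdvd i)
    have hmem : s - s' ∈ S ⊔ S' :=
      sub_mem (le_sup_left (a := S) hs) (le_sup_right (b := S') hs')
    have hyq : y ∈ S ⊔ S' := by
      by_contra hy0
      have h0 : (S ⊔ S').mkQ y ≠ 0 := by
        simpa [Submodule.Quotient.mk_eq_zero] using hy0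
      have hfin : IsOfFinAddOrder ((S ⊔ S').mkQ y) := by
        rw [isOfFinAddOrder_iff_nsmul_eq_zero]
        refine ⟨2, by norm_num, ?_⟩
        have : (2 : ℤ) • ((S ⊔ S').mkQ y) = 0 := by
          rw [← map_zsmul, h2y]
          exact (Submodule.Quotient.mk_eq_zero _).mpr hmem
        rw [← natCast_zsmul]; exact this
      exact hsum _ h0 hfin
    obtain ⟨a, ha, a', ha', hyaa⟩ := Submodule.mem_sup.mp hyq
    refine ⟨a, ha, ?_⟩
    have hrel : s - (2:ℤ) • a = s' + (2:ℤ) • a' := by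
      have h2 : (2:ℤ) • (a + a') = s - s' := by rw [hyaa]; exact h2y
      funext i
      have hc := congrFun h2 i
      simp only [Pi.smul_apply, Pi.add_apply, Pi.sub_apply, smul_eq_mul] at hc ⊢
      omega
    have hmem' : s - (2:ℤ) • a ∈ S' := by
      rw [hrel]; exact add_mem hs' (S'.smul_mem _ ha')
    have h0 : S'.mkQ (s - (2:ℤ) • a) = 0 :=
      (Submodule.Quotient.mk_eq_zero _).mpr hmem'
    rw [map_sub, map_zsmul, sub_eq_zero] at h0
    exact h0
  have hfg : N.FG := (IsNoetherian.noetherian S).map _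
  have hle : N ≤ (Ideal.span {2} : Ideal ℤ) • N := by
    rintro x ⟨s, hs, rfl⟩
    obtain ⟨a, ha, hEq⟩ := hstep s hs
    rw [Submodule.mkQ_apply] at hEq ⊢
    rw [hEq]
    exact Submodule.smul_mem_smul (Ideal.mem_span_singleton_self 2) ⟨a, ha, rfl⟩
  obtain ⟨r, hr1, hr0⟩ :=
    Submodule.exists_sub_one_mem_and_smul_eq_zero_of_fg_of_le_smul _ N hfg hle
  rw [Ideal.mem_span_singleton] at hr1
  have hr0' : r ≠ 0 := by
    rintro rfl
    obtain ⟨k, hk⟩ := hr1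
    omega
  intro s hs
  by_contra hns
  have hq0 : S'.mkQ s ≠ 0 := by
    simpa [Submodule.Quotient.mk_eq_zero] using hns
  have hfin : IsOfFinAddOrder (S'.mkQ s) := by
    rw [isOfFinAddOrder_iff_nsmul_eq_zero]
    refine ⟨r.natAbs, Int.natAbs_pos.mpr hr0', ?_⟩
    have h := hr0 (S'.mkQ s) ⟨s, hs, rfl⟩
    rcases Int.natAbs_eq r with h' | h'
    · rw [← natCast_zsmul, ← h', h]
    · rw [← natCast_zsmul]
      have h'' : ((r.natAbs : ℤ)) = -r := by omega
      rw [h'', neg_zsmul, h, neg_zero]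
  exact hS' _ hq0 hfin

theorem mod_two_images_distinct_of_pure
    (n : ℕ) (S S' : Submodule ℤ (Fin n → ℤ))
    (hS : ∀ g : (Fin n → ℤ) ⧸ S, g ≠ 0 → ¬IsOfFinAddOrder g)
    (hS' : ∀ g : (Fin n → ℤ) ⧸ S', g ≠ 0 → ¬IsOfFinAddOrder g)
    (hsum : ∀ g : (Fin n → ℤ) ⧸ (S ⊔ S'), g ≠ 0 → ¬IsOfFinAddOrder g)
    (hne : S ≠ S') :
    (fun (x : Fin n → ℤ) (i : Fin n) => ((x i : ℤ) : ZMod 2)) '' (S : Set (Fin n → ℤ)) ≠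
      (fun (x : Fin n → ℤ) (i : Fin n) => ((x i : ℤ) : ZMod 2)) '' (S' : Set (Fin n → ℤ)) := by
  intro h
  apply hne
  have hsum' : ∀ g : (Fin n → ℤ) ⧸ (S' ⊔ S), g ≠ 0 → ¬IsOfFinAddOrder g := by
    rwa [sup_comm]
  exact le_antisymm (key_le_of_mod_two_subset n S S' hS' hsum h.le)
    (key_le_of_mod_two_subset n S' S hS hsum' h.ge)
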